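/- Let k ≥ 1 and n : Fin k → ℕ with n i ≥ 1 for all i, and for p : Fin k → ℕ write n^p := ∏ i, (n i)^(p i). Let M be the monoid whose elements are pairs (m, p) with p : Fin k → ℕ and m ∈ ℕ, m < n^p, with multiplication (m,p)(m',p') = (m + n^p·m', p + p') and identity (0,0). Then M is right LCM (any two elements of M having a common right multiple have a right least common multiple) if and only if the n i are pairwise coprime. -/

import Mathlib

/-- The underlying set of the single-vertex `k`-graph of the standard product of
odometers: pairs `(m, p)` with `p : Fin k → ℕ` and `m < n^p := ∏ i, (n i)^(p i)`. -/
def Odo (k : ℕ) (n : Fin k → ℕ) : Type :=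
  { x : ℕ × (Fin k → ℕ) // x.1 < ∏ i, (n i) ^ (x.2 i) }

/-- Multiplication `(m,p)(m',p') = (m + n^p·m', p + p')` on `Odo k n`. -/
def odoMul {k : ℕ} (n : Fin k → ℕ) (x y : Odo k n) : Odo k n :=
  ⟨(x.val.1 + (∏ i, (n i) ^ (x.val.2 i)) * y.val.1, fun i => x.val.2 i + y.val.2 i), by
    have hx := x.property
    have hy := y.property
    have hsplit : (∏ i, (n i) ^ (x.val.2 i + y.val.2 i)) =
        (∏ i, (n i) ^ (x.val.2 i)) * ∏ i, (n i) ^ (y.val.2 i) := by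
      rw [← Finset.prod_mul_distrib]
      exact Finset.prod_congr rfl fun i _ => pow_add _ _ _
    calc x.val.1 + (∏ i, (n i) ^ (x.val.2 i)) * y.val.1
        < (∏ i, (n i) ^ (x.val.2 i)) + (∏ i, (n i) ^ (x.val.2 i)) * y.val.1 :=
          Nat.add_lt_add_right hx _
      _ = (∏ i, (n i) ^ (x.val.2 i)) * (y.val.1 + 1) := by ring
      _ ≤ (∏ i, (n i) ^ (x.val.2 i)) * ∏ i, (n i) ^ (y.val.2 i) :=
          Nat.mul_le_mul_left _ hy
      _ = ∏ i, (n i) ^ (x.val.2 i + y.val.2 i) := hsplit.symm⟩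

/-- The identity `(0, 0)` of `Odo k n`. -/
def odoOne (k : ℕ) (n : Fin k → ℕ) : Odo k n :=
  ⟨(0, fun _ => 0), by simp⟩

/-- `w` is a right multiple of `x` in `Odo k n`. -/
def OdoRightMultiple {k : ℕ} (n : Fin k → ℕ) (w x : Odo k n) : Prop :=
  ∃ r : Odo k n, w = odoMul n x r

/-- `w` is a right least common multiple of `x` and `y` in `Odo k n`. -/
def OdoIsRightLCM {k : ℕ} (n : Fin k → ℕ) (w x y : Odo k n) : Prop :=
  OdoRightMultiple n w x ∧ OdoRightMultiple n w y ∧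
    ∀ w' : Odo k n, OdoRightMultiple n w' x → OdoRightMultiple n w' y →
      OdoRightMultiple n w' w

lemma npow_pos {k : ℕ} {n : Fin k → ℕ} (hn : ∀ i, 1 ≤ n i) (p : Fin k → ℕ) :
    0 < ∏ i, (n i) ^ (p i) :=
  Finset.prod_pos fun i _ => pow_pos (hn i) _

lemma npow_dvd_of_le {k : ℕ} (n : Fin k → ℕ) {p q : Fin k → ℕ} (h : ∀ i, p i ≤ q i) :
    (∏ i, (n i) ^ (p i)) ∣ ∏ i, (n i) ^ (q i) :=
  Finset.prod_dvd_prod_of_dvd _ _ fun i _ => pow_dvd_pow _ (h i)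

lemma npow_add' {k : ℕ} (n : Fin k → ℕ) (p q : Fin k → ℕ) :
    (∏ i, (n i) ^ (p i + q i)) = (∏ i, (n i) ^ (p i)) * ∏ i, (n i) ^ (q i) := by
  rw [← Finset.prod_mul_distrib]
  exact Finset.prod_congr rfl fun i _ => pow_add _ _ _

lemma odo_rmul_iff {k : ℕ} {n : Fin k → ℕ} (hn : ∀ i, 1 ≤ n i) (w x : Odo k n) :
    OdoRightMultiple n w x ↔
      (∀ i, x.val.2 i ≤ w.val.2 i) ∧
        w.val.1 % (∏ i, (n i) ^ (x.val.2 i)) = x.val.1 := by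
  constructor
  · rintro ⟨r, rfl⟩
    refine ⟨fun i => Nat.le_add_right _ _, ?_⟩
    show (x.val.1 + (∏ i, (n i) ^ (x.val.2 i)) * r.val.1) % _ = _
    rw [Nat.add_mul_mod_self_left, Nat.mod_eq_of_lt x.property]
  · rintro ⟨hle, hmod⟩
    set N := ∏ i, (n i) ^ (x.val.2 i) with hN
    have hNpos : 0 < N := npow_pos hn _
    have hsplit : (∏ i, (n i) ^ (w.val.2 i)) =
        N * ∏ i, (n i) ^ (w.val.2 i - x.val.2 i) := by
      rw [hN, ← npow_add' n]
      exact Finset.prod_congr rfl fun i _ => by rw [Nat.add_sub_cancel' (hle i)]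
    have hwlt : w.val.1 < N * ∏ i, (n i) ^ (w.val.2 i - x.val.2 i) := by
      rw [← hsplit]; exact w.property
    refine ⟨⟨(w.val.1 / N, fun i => w.val.2 i - x.val.2 i), ?_⟩, ?_⟩
    · show w.val.1 / N < ∏ i, (n i) ^ (w.val.2 i - x.val.2 i)
      exact Nat.div_lt_of_lt_mul hwlt
    · apply Subtype.ext
      apply Prod.ext
      · show w.val.1 = x.val.1 + N * (w.val.1 / N)
        conv_lhs => rw [← Nat.mod_add_div w.val.1 N, hmod]
      · funext i
        exact (Nat.add_sub_cancel' (hle i)).symm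

lemma npow_single {k : ℕ} (n : Fin k → ℕ) (i : Fin k) :
    (∏ l, (n l) ^ (if l = i then 1 else 0)) = n i := by
  simp [pow_ite]

lemma modeq_sup {k : ℕ} {n : Fin k → ℕ}
    (hcop : ∀ i j : Fin k, i ≠ j → Nat.gcd (n i) (n j) = 1)
    (p q : Fin k → ℕ) (c c' : ℕ)
    (h1 : c ≡ c' [MOD ∏ i, (n i) ^ (p i)]) (h2 : c ≡ c' [MOD ∏ i, (n i) ^ (q i)]) :
    c ≡ c' [MOD ∏ i, (n i) ^ (max (p i) (q i))] := by
  rw [Nat.modEq_iff_dvd] at h1 h2 ⊢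
  push_cast at h1 h2 ⊢
  apply Fintype.prod_dvd_of_coprime
  · intro i j hij
    exact (IsCoprime.pow (Nat.isCoprime_iff_coprime.2 (hcop i j hij)))
  · intro i
    rcases le_total (q i) (p i) with h | h
    · rw [max_eq_left h]
      exact dvd_trans (Finset.dvd_prod_of_mem (fun l => ((n l : ℤ)) ^ (p l))
        (Finset.mem_univ i)) h1
    · rw [max_eq_right h]
      exact dvd_trans (Finset.dvd_prod_of_mem (fun l => ((n l : ℤ)) ^ (q l))
        (Finset.mem_univ i)) h2

/-- The monoid `Odo k n` is right LCM (any two elements having a common right multiple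
have a right least common multiple) if and only if the `n i` are pairwise coprime. -/
theorem odo_rightLCM_iff_pairwise_coprime (k : ℕ) (hk : 1 ≤ k)
    (n : Fin k → ℕ) (hn : ∀ i, 1 ≤ n i) :
    (∀ x y : Odo k n, (∃ w, OdoRightMultiple n w x ∧ OdoRightMultiple n w y) →
      ∃ w, OdoIsRightLCM n w x y) ↔
      ∀ i j : Fin k, i ≠ j → Nat.gcd (n i) (n j) = 1 := by
  constructor
  · -- right LCM ⇒ pairwise coprime
    intro hLCM i j hij
    by_contra hne
    -- set up indicator degrees
    set ei : Fin k → ℕ := fun l => if l = i then 1 else 0 with hei_def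
    set ej : Fin k → ℕ := fun l => if l = j then 1 else 0 with hej_def
    have hNi : (∏ l, (n l) ^ (ei l)) = n i := npow_single n i
    have hNj : (∏ l, (n l) ^ (ej l)) = n j := npow_single n j
    have hNij : (∏ l, (n l) ^ (ei l + ej l)) = n i * n j := by
      rw [npow_add' n, hNi, hNj]
    have hni : 0 < n i := hn i
    have hnj : 0 < n j := hn j
    have hLpos : 0 < Nat.lcm (n i) (n j) := Nat.lcm_pos hni hnj
    have hgcd2 : 2 ≤ Nat.gcd (n i) (n j) := by
      have := Nat.gcd_pos_of_pos_left (n j) hni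
      omega
    have hLlt : Nat.lcm (n i) (n j) < n i * n j := by
      have hgl := Nat.gcd_mul_lcm (n i) (n j)
      calc Nat.lcm (n i) (n j) < 2 * Nat.lcm (n i) (n j) := by omega
        _ ≤ Nat.gcd (n i) (n j) * Nat.lcm (n i) (n j) :=
            Nat.mul_le_mul_right _ hgcd2
        _ = n i * n j := hgl
    set x : Odo k n := ⟨(0, ei), by rw [hNi]; exact hni⟩ with hx_def
    set y : Odo k n := ⟨(0, ej), by rw [hNj]; exact hnj⟩ with hy_def
    set w0 : Odo k n := ⟨(0, fun l => ei l + ej l), by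
      rw [hNij]; exact Nat.mul_pos hni hnj⟩ with hw0_def
    set w1 : Odo k n := ⟨(Nat.lcm (n i) (n j), fun l => ei l + ej l), by
      rw [hNij]; exact hLlt⟩ with hw1_def
    have hw0x : OdoRightMultiple n w0 x := by
      rw [odo_rmul_iff hn]
      exact ⟨fun l => Nat.le_add_right _ _, Nat.zero_mod _⟩
    have hw0y : OdoRightMultiple n w0 y := by
      rw [odo_rmul_iff hn]
      exact ⟨fun l => Nat.le_add_left _ _, Nat.zero_mod _⟩
    have hw1x : OdoRightMultiple n w1 x := by
      rw [odo_rmul_iff hn]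
      refine ⟨fun l => Nat.le_add_right _ _, ?_⟩
      show Nat.lcm (n i) (n j) % (∏ l, (n l) ^ (ei l)) = 0
      rw [hNi]
      exact Nat.mod_eq_zero_of_dvd (Nat.dvd_lcm_left _ _)
    have hw1y : OdoRightMultiple n w1 y := by
      rw [odo_rmul_iff hn]
      refine ⟨fun l => Nat.le_add_left _ _, ?_⟩
      show Nat.lcm (n i) (n j) % (∏ l, (n l) ^ (ej l)) = 0
      rw [hNj]
      exact Nat.mod_eq_zero_of_dvd (Nat.dvd_lcm_right _ _)
    obtain ⟨w, hwx, hwy, hleast⟩ := hLCM x y ⟨w0, hw0x, hw0y⟩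
    have hwx' := (odo_rmul_iff hn w x).1 hwx
    have hwy' := (odo_rmul_iff hn w y).1 hwy
    have h0 := (odo_rmul_iff hn w0 w).1 (hleast w0 hw0x hw0y)
    have hw1m : w.val.1 = 0 := by
      have h02 := h0.2
      exact h02.symm.trans (Nat.zero_mod _)
    have hwdeg : w.val.2 = fun l => ei l + ej l := by
      funext l
      have a1 := hwx'.1 l
      have a2 := hwy'.1 l
      have a3 := h0.1 l
      have b1 : (if l = i then 1 else 0) ≤ w.val.2 l := a1
      have b2 : (if l = j then 1 else 0) ≤ w.val.2 l := a2
      have b3 : w.val.2 l ≤ (if l = i then 1 else 0) + (if l = j then 1 else 0) := a3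
      show w.val.2 l = (if l = i then 1 else 0) + (if l = j then 1 else 0)
      rcases eq_or_ne l i with hli | hli <;> rcases eq_or_ne l j with hlj | hlj
      · exact absurd (hli.symm.trans hlj) hij
      · have e1 : (if l = i then (1:ℕ) else 0) = 1 := if_pos hli
        have e2 : (if l = j then (1:ℕ) else 0) = 0 := if_neg hlj
        omega
      · have e1 : (if l = i then (1:ℕ) else 0) = 0 := if_neg hli
        have e2 : (if l = j then (1:ℕ) else 0) = 1 := if_pos hlj
        omega
      · have e1 : (if l = i then (1:ℕ) else 0) = 0 := if_neg hli
        have e2 : (if l = j then (1:ℕ) else 0) = 0 := if_neg hlj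
        omega
    have hlast := (odo_rmul_iff hn w1 w).1 (hleast w1 hw1x hw1y)
    have hmod := hlast.2
    rw [hwdeg, hNij, hw1m] at hmod
    have hdvd : n i * n j ∣ Nat.lcm (n i) (n j) := Nat.dvd_of_mod_eq_zero hmod
    have := Nat.le_of_dvd hLpos hdvd
    omega
  · -- pairwise coprime ⇒ right LCM
    intro hcop x y ⟨w', hx', hy'⟩
    rw [odo_rmul_iff hn] at hx' hy'
    obtain ⟨hple, hpmod⟩ := hx'
    obtain ⟨hqle, hqmod⟩ := hy'
    set p := x.val.2
    set q := y.val.2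
    set s : Fin k → ℕ := fun l => max (p l) (q l) with hs_def
    have hNs_pos : 0 < ∏ l, (n l) ^ (s l) := npow_pos hn s
    set wl : Odo k n := ⟨(w'.val.1 % ∏ l, (n l) ^ (s l), s),
      Nat.mod_lt _ hNs_pos⟩ with hwl_def
    have hdvd_p : (∏ l, (n l) ^ (p l)) ∣ ∏ l, (n l) ^ (s l) :=
      npow_dvd_of_le n fun l => le_max_left _ _
    have hdvd_q : (∏ l, (n l) ^ (q l)) ∣ ∏ l, (n l) ^ (s l) :=
      npow_dvd_of_le n fun l => le_max_right _ _
    refine ⟨wl, ?_, ?_, ?_⟩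
    · rw [odo_rmul_iff hn]
      refine ⟨fun l => le_max_left _ _, ?_⟩
      show (w'.val.1 % ∏ l, (n l) ^ (s l)) % (∏ l, (n l) ^ (p l)) = x.val.1
      rw [Nat.mod_mod_of_dvd _ hdvd_p]
      exact hpmod
    · rw [odo_rmul_iff hn]
      refine ⟨fun l => le_max_right _ _, ?_⟩
      show (w'.val.1 % ∏ l, (n l) ^ (s l)) % (∏ l, (n l) ^ (q l)) = y.val.1
      rw [Nat.mod_mod_of_dvd _ hdvd_q]
      exact hqmod
    · intro w'' h1 h2
      rw [odo_rmul_iff hn] at h1 h2 ⊢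
      obtain ⟨h1le, h1mod⟩ := h1
      obtain ⟨h2le, h2mod⟩ := h2
      refine ⟨fun l => max_le (h1le l) (h2le l), ?_⟩
      have hm1 : w''.val.1 ≡ w'.val.1 [MOD ∏ l, (n l) ^ (p l)] := by
        show _ % _ = _ % _
        rw [h1mod, hpmod]
      have hm2 : w''.val.1 ≡ w'.val.1 [MOD ∏ l, (n l) ^ (q l)] := by
        show _ % _ = _ % _
        rw [h2mod, hqmod]
      have := modeq_sup hcop p q _ _ hm1 hm2
      show w''.val.1 % (∏ l, (n l) ^ (s l)) = w'.val.1 % ∏ l, (n l) ^ (s l)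
      exact this
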